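/- Let G be a finite acyclic directed graph with an ER-labeling λ, and let u be a vertex. Then the union over all vertices v reachable from u of the unique λ-rising path from u to v forms a spanning tree of the set of vertices reachable from u, rooted at u and directed away from u. -/

import Mathlib

/-!
Given a finite acyclic directed graph with an ER-labeling `λ` and a vertex `u`,
the union of all `λ`-rising paths from `u` to vertices reachable from `u` forms a
spanning tree of the set of reachable vertices, rooted at `u` and directed away from `u`:
every reachable vertex is reached from `u` by a unique path using only edges of
rising paths.
-/

/-- Directed walks in a graph `E`, recorded by the list of vertices after the start. -/
inductive DWalk {α : Type*} (E : α → α → Prop) : α → α → List α → Prop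
  | nil (u : α) : DWalk E u u []
  | cons {u w v : α} {l : List α} : E u w → DWalk E w v l → DWalk E u v (w :: l)

/-- The sequence of edge labels along a walk from `u` with vertex list `l`. -/
def wLabels {α : Type*} (lab : α → α → ℕ) (u : α) (l : List α) : List ℕ :=
  List.zipWith lab (u :: l) l

private lemma dwalk_split {α : Type*} {E : α → α → Prop} :
    ∀ (l₁ : List α) {a b : α} {l₂ : List α}, DWalk E a b (l₁ ++ l₂) →
      ∃ c, DWalk E a c l₁ ∧ DWalk E c b l₂ := by
  intro l₁
  induction l₁ with
  | nil => intro a b l₂ h; exact ⟨a, DWalk.nil a, h⟩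
  | cons w t ih =>
      intro a b l₂ h
      cases h with
      | cons e h' =>
          obtain ⟨c, h1, h2⟩ := ih h'
          exact ⟨c, DWalk.cons e h1, h2⟩

private lemma dwalk_last {α : Type*} {E : α → α → Prop} :
    ∀ {l : List α} {a b : α}, DWalk E a b l → b = (a :: l).getLast (by simp) := by
  intro l
  induction l with
  | nil => intro a b h; cases h; simp
  | cons w t ih =>
      intro a b h
      cases h with
      | cons e h' => simpa using ih h'

private lemma wLabels_append {α : Type*} (lab : α → α → ℕ) :
    ∀ (l₁ : List α) (a : α) (l₂ : List α),
      wLabels lab a (l₁ ++ l₂)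
        = wLabels lab a l₁ ++ wLabels lab ((a :: l₁).getLast (by simp)) l₂ := by
  intro l₁
  induction l₁ with
  | nil => intro a l₂; simp [wLabels]
  | cons w t ih =>
      intro a l₂
      have hc : ∀ (b : α) (r : List α), wLabels lab b (w :: r) = lab b w :: wLabels lab w r :=
        fun b r => rfl
      rw [List.cons_append, hc, ih w l₂, hc]
      simp

private lemma mem_zip_decomp {α : Type*} :
    ∀ (l : List α) (a x y : α), (x, y) ∈ (a :: l).zip l →
      ∃ p s, l = p ++ y :: s ∧ x = (a :: p).getLast (by simp) := by
  intro l
  induction l with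
  | nil => intro a x y h; simp [List.zip] at h
  | cons w t ih =>
      intro a x y h
      rw [List.zip_cons_cons, List.mem_cons] at h
      rcases h with h | h
      · refine ⟨[], t, ?_, ?_⟩
        · simpa using (congrArg Prod.snd h).symm
        · simpa using congrArg Prod.fst h
      · obtain ⟨p, s, hl, hx⟩ := ih w x y h
        refine ⟨w :: p, s, by simp [hl], ?_⟩
        rw [hx]; simp

theorem ER_labeling_source_tree {V : Type*} [Fintype V]
    (E : V → V → Prop) (lab : V → V → ℕ)
    (hacyclic : ∀ (u : V) (l : List V), DWalk E u u l → l = [])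
    (hER : ∀ u v : V, (∃ l, DWalk E u v l) →
      ∃! l, DWalk E u v l ∧ List.Chain' (· < ·) (wLabels lab u l))
    (u : V) :
    ∀ v : V, (∃ l, DWalk E u v l) →
      ∃! l : List V,
        DWalk (fun x y => E x y ∧
          ∃ (v' : V) (l' : List V), DWalk E u v' l' ∧
            List.Chain' (· < ·) (wLabels lab u l') ∧ (x, y) ∈ (u :: l').zip l') u v l := by
  set T : V → V → Prop := fun x y => E x y ∧
      ∃ (v' : V) (l' : List V), DWalk E u v' l' ∧
        List.Chain' (· < ·) (wLabels lab u l') ∧ (x, y) ∈ (u :: l').zip l' with hT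
  -- Key fact A: a tree edge (x, y) extends the rising path to x into the rising path to y.
  have keyA : ∀ x y : V, T x y →
      ∃ p, DWalk E u x p ∧ List.Chain' (· < ·) (wLabels lab u p) ∧
        DWalk E u y (p ++ [y]) ∧ List.Chain' (· < ·) (wLabels lab u (p ++ [y])) := by
    intro x y hxy
    obtain ⟨hE, v', l', hwalk, hchain, hmem⟩ := hxy
    obtain ⟨p, s, hl, hx⟩ := mem_zip_decomp l' u x y hmem
    subst hl
    have hsplit : DWalk E u v' ((p ++ [y]) ++ s) := by simpa using hwalk
    obtain ⟨c, h1, _⟩ := dwalk_split (p ++ [y]) hsplit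
    have hcy : c = y := by
      have := dwalk_last h1
      simpa using this
    rw [hcy] at h1
    obtain ⟨d, hp, hdy⟩ := dwalk_split p h1
    have hdx : d = x := by rw [hx]; exact dwalk_last hp
    rw [hdx] at hp
    have hchain' : List.Chain' (· < ·) (wLabels lab u (p ++ [y])) := by
      have : wLabels lab u ((p ++ [y]) ++ s)
          = wLabels lab u (p ++ [y]) ++ _ := wLabels_append lab (p ++ [y]) u s
      refine List.IsChain.prefix ?_ ⟨_, this.symm⟩
      simpa [List.Chain'] using hchain
    have hchainp : List.Chain' (· < ·) (wLabels lab u p) := by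
      have : wLabels lab u (p ++ [y]) = wLabels lab u p ++ _ := wLabels_append lab p u [y]
      exact List.IsChain.prefix hchain' ⟨_, this.symm⟩
    exact ⟨p, hp, hchainp, h1, hchain'⟩
  -- Key fact C: a T-walk starting at the end of a rising path extends it to a rising path.
  have keyC : ∀ (l : List V) (w x : V), DWalk T w x l →
      ∀ p, DWalk E u w p → List.Chain' (· < ·) (wLabels lab u p) →
        DWalk E u x (p ++ l) ∧ List.Chain' (· < ·) (wLabels lab u (p ++ l)) := by
    intro l
    induction l with
    | nil =>
        intro w x h p hp hc
        cases h
        exact ⟨by simpa using hp, by simpa using hc⟩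
    | cons w₁ t ih =>
        intro w x h p hp hc
        cases h with
        | cons e h' =>
            obtain ⟨q, hq, hqc, hq1, hq1c⟩ := keyA w w₁ e
            have hpq : q = p := by
              obtain ⟨m, _, hm⟩ := hER u w ⟨p, hp⟩
              rw [hm q ⟨hq, hqc⟩, hm p ⟨hp, hc⟩]
            rw [hpq] at hq1 hq1c
            have := ih w₁ x h' (p ++ [w₁]) hq1 hq1c
            simpa using this
  -- Main proof.
  intro v hv
  obtain ⟨m, ⟨hmwalk, hmchain⟩, hmuniq⟩ := hER u v hv
  refine ⟨m, ?_, ?_⟩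
  · -- the rising path is a T-walk: each of its edges lies on a rising path (itself)
    have gen : ∀ (l : List V) (w : V), DWalk E w v l →
        (∀ q ∈ (w :: l).zip l, q ∈ (u :: m).zip m) → DWalk T w v l := by
      intro l
      induction l with
      | nil => intro w h _; cases h; exact DWalk.nil _
      | cons w₁ t ih =>
          intro w h hsub
          cases h with
          | cons e h' =>
              refine DWalk.cons ⟨e, v, m, hmwalk, hmchain, ?_⟩ (ih w₁ h' ?_)
              · exact hsub (w, w₁) (by rw [List.zip_cons_cons]; exact List.mem_cons_self)
              · intro q hq
                exact hsub q (by rw [List.zip_cons_cons]; exact List.mem_cons_of_mem _ hq)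
    exact gen m u hmwalk (fun q hq => hq)
  · -- uniqueness: any T-walk from u to v is a rising walk, hence equals m
    intro l hl
    have := keyC l u v hl [] (DWalk.nil u) (by simp [wLabels]; exact List.isChain_nil)
    exact hmuniq l ⟨by simpa using this.1, by simpa using this.2⟩
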